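/- Let $f_1,\ldots,f_m:\mathbb{R}^n\to\mathbb{R}$ be convex differentiable and $g_1,\ldots,g_m:\mathbb{R}^n\to\mathbb{R}\cup\{+\infty\}$ convex, $x\in\mathbb{R}^n$ with all $g_i(x)$ finite, $u\ne 0$, $\varepsilon>0$. If $M:=\max_{i}\{\langle\nabla f_i(x),u\rangle+g_i(x+u)-g_i(x)\}<0$ and $u$ is not an $\varepsilon$-normalized descent direction at $x$ (i.e., $M+\varepsilon\|u\|^2>0$), then for any real $t$ with $0<t\le|M|$, the vector $d=\frac{tu}{\varepsilon\|u\|^2}$ is an $\varepsilon$-normalized descent direction of $\mathcal{V}$ at $x$. -/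

import Mathlib

noncomputable section

/-- Convexity for extended-real-valued functions. -/
def ERealConvexOn {n : ℕ} (g : EuclideanSpace ℝ (Fin n) → EReal) : Prop :=
  ∀ a b : EuclideanSpace ℝ (Fin n), ∀ θ : ℝ, 0 ≤ θ → θ ≤ 1 →
    g (θ • a + (1 - θ) • b) ≤ (θ : EReal) * g a + ((1 - θ : ℝ) : EReal) * g b

/-- `ψ(x,y) = max_i { ⟨∇f_i(x), y⟩ + g_i(x+y) - g_i(x) }`. -/
def psi {n m : ℕ} (Gf : Fin m → EuclideanSpace ℝ (Fin n) → EuclideanSpace ℝ (Fin n))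
    (g : Fin m → EuclideanSpace ℝ (Fin n) → EReal)
    (x y : EuclideanSpace ℝ (Fin n)) : EReal :=
  ⨆ i, (((inner ℝ (Gf i x) y : ℝ) : EReal) + g i (x + y) - g i x)

theorem stmt1 {n m : ℕ} (hm : 0 < m)
    (f : Fin m → EuclideanSpace ℝ (Fin n) → ℝ)
    (Gf : Fin m → EuclideanSpace ℝ (Fin n) → EuclideanSpace ℝ (Fin n))
    (hfconv : ∀ i, ConvexOn ℝ Set.univ (f i))
    (hfdiff : ∀ i x, HasGradientAt (f i) (Gf i x) x)
    (g : Fin m → EuclideanSpace ℝ (Fin n) → EReal)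
    (hgconv : ∀ i, ERealConvexOn (g i))
    (hgbot : ∀ i y, g i y ≠ ⊥)
    (x : EuclideanSpace ℝ (Fin n))
    (hgx : ∀ i, g i x ≠ ⊤)
    (u : EuclideanSpace ℝ (Fin n)) (hu : u ≠ 0)
    (ε : ℝ) (hε : 0 < ε)
    (hM : psi Gf g x u < 0)
    (hnot : psi Gf g x u + ((ε * ‖u‖ ^ 2 : ℝ) : EReal) > 0)
    (t : ℝ) (ht0 : 0 < t) (ht1 : (t : EReal) ≤ -(psi Gf g x u)) :
    psi Gf g x ((t / (ε * ‖u‖ ^ 2)) • u)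
      + ((ε * ‖(t / (ε * ‖u‖ ^ 2)) • u‖ ^ 2 : ℝ) : EReal) ≤ 0 := by
  haveI : Nonempty (Fin m) := ⟨⟨0, hm⟩⟩
  set c : ℝ := ε * ‖u‖ ^ 2 with hc
  have hcpos : 0 < c := by
    have h0 : 0 < ‖u‖ := norm_pos_iff.2 hu
    positivity
  -- each term at u is ≤ ψ
  have hterm_le : ∀ i, ((inner ℝ (Gf i x) u : ℝ) : EReal) + g i (x + u) - g i x ≤ psi Gf g x u :=
    fun i => le_iSup (fun i => ((inner ℝ (Gf i x) u : ℝ) : EReal) + g i (x + u) - g i x) i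
  -- ψ(x,u) is a real number
  have hMbot : psi Gf g x u ≠ ⊥ := by
    intro h
    have := hterm_le ⟨0, hm⟩
    rw [h, le_bot_iff] at this
    set i : Fin m := ⟨0, hm⟩
    have h1 : g i x ≠ ⊥ := hgbot i x
    have h2 : g i x ≠ ⊤ := hgx i
    lift g i x to ℝ using ⟨h2, h1⟩ with a ha
    rw [sub_eq_add_neg, ← EReal.coe_neg] at this
    rcases EReal.add_eq_bot_iff.1 this with h' | h'
    · rcases EReal.add_eq_bot_iff.1 h' with h'' | h''
      · exact EReal.coe_ne_bot _ h''
      · exact hgbot i (x + u) h''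
    · exact EReal.coe_ne_bot _ h'
  have hMtop : psi Gf g x u ≠ ⊤ := fun h => absurd hM (by rw [h]; exact not_lt.2 le_top)
  set M : ℝ := (psi Gf g x u).toReal with hMdef
  have hMeq : (M : EReal) = psi Gf g x u := EReal.coe_toReal hMtop hMbot
  have hMneg : M < 0 := by
    have := hM; rw [← hMeq] at this; exact_mod_cast this
  have hnotR : 0 < M + c := by
    rw [← hMeq, ← EReal.coe_add] at hnot; exact_mod_cast hnot
  have htM : t ≤ -M := by
    rw [← hMeq, ← EReal.coe_neg] at ht1; exact_mod_cast ht1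
  -- g i (x+u) is real for each i
  have hgu_top : ∀ i, g i (x + u) ≠ ⊤ := by
    intro i h
    have := hterm_le i
    rw [h] at this
    have h2 : ((inner ℝ (Gf i x) u : ℝ) : EReal) + ⊤ = ⊤ := EReal.add_top_of_ne_bot (EReal.coe_ne_bot _)
    rw [h2, sub_eq_add_neg, EReal.top_add_of_ne_bot (by simpa using hgx i)] at this
    exact hMtop (top_le_iff.1 this)
  set a : Fin m → ℝ := fun i => (g i x).toReal with hadef
  set b : Fin m → ℝ := fun i => (g i (x + u)).toReal with hbdef
  have hga : ∀ i, (a i : EReal) = g i x := fun i => EReal.coe_toReal (hgx i) (hgbot i x)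
  have hgb : ∀ i, (b i : EReal) = g i (x + u) := fun i => EReal.coe_toReal (hgu_top i) (hgbot i _)
  have hkey : ∀ i, (inner ℝ (Gf i x) u : ℝ) + b i - a i ≤ M := by
    intro i
    have := hterm_le i
    rw [← hga i, ← hgb i, ← hMeq, ← EReal.coe_add, ← EReal.coe_sub] at this
    exact_mod_cast this
  set lam : ℝ := t / c with hlam
  have hlam0 : 0 < lam := div_pos ht0 hcpos
  have hlam1 : lam ≤ 1 := by
    rw [div_le_one hcpos]; linarith
  have hlamc : lam * c = t := div_mul_cancel₀ t hcpos.ne'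
  -- convexity bound
  have hconvpt : ∀ i, g i (x + lam • u) ≤ ((lam * b i + (1 - lam) * a i : ℝ) : EReal) := by
    intro i
    have h := hgconv i (x + u) x lam hlam0.le hlam1
    have hpt : lam • (x + u) + (1 - lam) • x = x + lam • u := by
      rw [smul_add, sub_smul, one_smul]; abel
    rw [hpt, ← hga i, ← hgb i, ← EReal.coe_mul, ← EReal.coe_mul, ← EReal.coe_add] at h
    exact h
  have hglam_top : ∀ i, g i (x + lam • u) ≠ ⊤ := fun i h => by
    have := hconvpt i; rw [h] at this
    exact EReal.coe_ne_top _ (top_le_iff.1 this)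
  set cc : Fin m → ℝ := fun i => (g i (x + lam • u)).toReal with hccdef
  have hgcc : ∀ i, (cc i : EReal) = g i (x + lam • u) :=
    fun i => EReal.coe_toReal (hglam_top i) (hgbot i _)
  have hccle : ∀ i, cc i ≤ lam * b i + (1 - lam) * a i := by
    intro i
    have := hconvpt i; rw [← hgcc i] at this; exact_mod_cast this
  -- bound ψ at lam • u
  have hpsi2 : psi Gf g x (lam • u) ≤ ((-(lam * t) : ℝ) : EReal) := by
    apply iSup_le
    intro i
    rw [← hga i, ← hgcc i]
    have hin : (inner ℝ (Gf i x) (lam • u) : ℝ) = lam * (inner ℝ (Gf i x) u : ℝ) :=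
      real_inner_smul_right _ _ _
    rw [hin, ← EReal.coe_add, ← EReal.coe_sub]
    apply EReal.coe_le_coe_iff.2
    have h1 := hccle i
    have h2 := hkey i
    nlinarith [hlam0.le, htM]
  have hnorm : ε * ‖lam • u‖ ^ 2 = lam * t := by
    rw [norm_smul, Real.norm_eq_abs, abs_of_pos hlam0, mul_pow]
    calc ε * (lam ^ 2 * ‖u‖ ^ 2) = lam * (lam * c) := by ring
    _ = lam * t := by rw [hlamc]
  calc psi Gf g x (lam • u) + ((ε * ‖lam • u‖ ^ 2 : ℝ) : EReal)
      ≤ ((-(lam * t) : ℝ) : EReal) + ((lam * t : ℝ) : EReal) := by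
        rw [hnorm]; exact add_le_add_left hpsi2 _
    _ = 0 := by rw [← EReal.coe_add]; norm_num
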